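/- Let T be a finite tree, v any vertex, and c a center vertex of T with d(v,c) = d(v, C_T). Then c has an eccentricity witness w (i.e., d(c,w) = ecc(c)) such that the unique path from v to w passes through c, equivalently d(v,w) = d(v,c) + d(c,w). -/

import Mathlib

open SimpleGraph

/-- The eccentricity of a vertex: the maximum distance to any vertex. -/
noncomputable def ecc {V : Type*} [Fintype V] (G : SimpleGraph V) (v : V) : ℕ :=
  Finset.univ.sup (fun u => G.dist v u)

/-- The radius: the minimum eccentricity. -/
noncomputable def grad {V : Type*} [Fintype V] (G : SimpleGraph V) : ℕ :=
  sInf {n : ℕ | ∃ v : V, ecc G v = n}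

/-- The center: the set of vertices of minimum eccentricity. -/
noncomputable def center {V : Type*} [Fintype V] (G : SimpleGraph V) : Set V :=
  {v : V | ecc G v = grad G}

section TreeAux

variable {V : Type*} {T : SimpleGraph V}

private lemma tree_path_length (hT : T.IsTree) {a b : V} (p : T.Walk a b) (hp : p.IsPath) :
    p.length = T.dist a b := by
  obtain ⟨q, hq, hql⟩ := hT.isConnected.exists_path_of_dist a b
  have h := hT.IsAcyclic.path_unique ⟨p, hp⟩ ⟨q, hq⟩
  rw [show p = q from congrArg Subtype.val h, hql]

private lemma shortest_walk_mem (hT : T.IsTree) {a b y : V} (p : T.Walk a b)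
    (hl : p.length = T.dist a b) (hy : y ∈ p.support) :
    T.dist a y + T.dist y b = T.dist a b := by
  classical
  have h1 : T.dist a y ≤ (p.takeUntil y hy).length := dist_le _
  have h2 : T.dist y b ≤ (p.dropUntil y hy).length := dist_le _
  have h3 : (p.takeUntil y hy).length + (p.dropUntil y hy).length = p.length := by
    rw [← Walk.length_append, Walk.take_spec]
  have tri : T.dist a b ≤ T.dist a y + T.dist y b := hT.isConnected.dist_triangle
  omega

private lemma glue_isPath {a m b : V} {p : T.Walk a m} {q : T.Walk m b}
    (hp : p.IsPath) (hq : q.IsPath)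
    (hdisj : ∀ y, y ∈ p.support → y ∈ q.support → y = m) :
    (p.append q).IsPath := by
  rw [Walk.isPath_def, Walk.support_append]
  have hmt : m ∉ q.support.tail := by
    have := hq.support_nodup
    rw [q.support_eq_cons] at this
    exact (List.nodup_cons.mp this).1
  refine List.Nodup.append hp.support_nodup (hq.support_nodup.tail) ?_
  intro y hyp hyt
  have hyq : y ∈ q.support := List.mem_of_mem_tail hyt
  exact hmt ((hdisj y hyp hyq) ▸ hyt)

private lemma dist_zero_eq (hT : T.IsTree) {y u : V} (h : T.dist y u = 0) : y = u := by
  by_contra hne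
  exact dist_ne_zero_iff_ne_and_reachable.mpr ⟨hne, hT.isConnected.preconnected y u⟩ h

private lemma btw_trans (hT : T.IsTree) {v u c x : V}
    (huc : T.dist u c ≠ 0)
    (h1 : T.dist v c = T.dist v u + T.dist u c)
    (h2 : T.dist u x = T.dist u c + T.dist c x) :
    T.dist v x = T.dist v c + T.dist c x := by
  have hconn := hT.isConnected
  obtain ⟨p, hp, hpl⟩ := hconn.exists_path_of_dist v u
  obtain ⟨q, hq, hql⟩ := hconn.exists_path_of_dist u c
  obtain ⟨r, hr, hrl⟩ := hconn.exists_path_of_dist c x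
  have hpq : (p.append q).IsPath := by
    refine glue_isPath hp hq fun y hyp hyq => ?_
    have s1 := shortest_walk_mem hT p hpl hyp
    have s2 := shortest_walk_mem hT q hql hyq
    have tri : T.dist v c ≤ T.dist v y + T.dist y c := hconn.dist_triangle
    have c1 : T.dist y u = T.dist u y := dist_comm
    exact dist_zero_eq hT (by omega)
  have hpql : (p.append q).length = T.dist v c := by
    rw [Walk.length_append]; omega
  have hW : ((p.append q).append r).IsPath := by
    refine glue_isPath hpq hr fun y hy hyr => ?_
    have s4 := shortest_walk_mem hT r hrl hyr
    rcases (Walk.mem_support_append_iff p q).mp hy with hyp | hyq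
    · exfalso
      have s1 := shortest_walk_mem hT p hpl hyp
      have t1 : T.dist u x ≤ T.dist u y + T.dist y x := hconn.dist_triangle
      have t2 : T.dist u y ≤ T.dist u c + T.dist c y := hconn.dist_triangle
      have t3 : T.dist v c ≤ T.dist v y + T.dist y c := hconn.dist_triangle
      have c1 : T.dist y u = T.dist u y := dist_comm
      have c2 : T.dist c y = T.dist y c := dist_comm
      omega
    · have s2 := shortest_walk_mem hT q hql hyq
      have t1 : T.dist u x ≤ T.dist u y + T.dist y x := hconn.dist_triangle
      have c1 : T.dist u y = T.dist y u := dist_comm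
      have c2 : T.dist c y = T.dist y c := dist_comm
      exact dist_zero_eq hT (by omega)
  have hWl := tree_path_length hT _ hW
  rw [Walk.length_append, hpql, hrl] at hWl
  omega

private lemma adj_dist_cases (hT : T.IsTree) {u c : V} (h : T.Adj u c) (x : V) :
    T.dist x u = T.dist x c + 1 ∨ T.dist x c = T.dist x u + 1 := by
  have hconn := hT.isConnected
  obtain ⟨p, hp, hpl⟩ := hconn.exists_path_of_dist x u
  by_cases hcp : c ∈ p.support
  · left
    have s := shortest_walk_mem hT p hpl hcp
    have h1 : T.dist c u = 1 := dist_eq_one_iff_adj.mpr h.symm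
    omega
  · right
    have hcn : (Walk.cons h Walk.nil : T.Walk u c).IsPath := by
      simp [Walk.isPath_def, h.ne]
    have hq : (p.concat h).IsPath := by
      rw [Walk.concat_eq_append]
      refine glue_isPath hp hcn fun y hyp hyc => ?_
      simp only [Walk.support_cons, Walk.support_nil, List.mem_cons,
        List.mem_singleton, List.not_mem_nil, or_false] at hyc
      rcases hyc with rfl | rfl
      · rfl
      · exact absurd hyp hcp
    have hl := tree_path_length hT _ hq
    rw [Walk.length_concat, hpl] at hl
    omega

end TreeAux

/-- In a tree, if `c` is a center vertex closest to `v`, then `c` has an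
eccentricity witness `w` such that the path from `v` to `w` passes through `c`. -/
theorem tree_center_ecc_witness {V : Type*} [Fintype V] (T : SimpleGraph V)
    (hT : T.IsTree) (v c : V) (hc : c ∈ _root_.center T)
    (hclosest : ∀ c' ∈ _root_.center T, T.dist v c ≤ T.dist v c') :
    ∃ w : V, T.dist c w = ecc T c ∧ T.dist v w = T.dist v c + T.dist c w := by
  have hconn := hT.isConnected
  haveI : Nonempty V := ⟨c⟩
  obtain ⟨w0, -, hw0⟩ :=
    Finset.exists_mem_eq_sup Finset.univ Finset.univ_nonempty (fun u => T.dist c u)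
  have hw0' : T.dist c w0 = ecc T c := by rw [ecc]; exact hw0.symm
  by_cases hvc : v = c
  · subst hvc
    exact ⟨w0, hw0', by rw [SimpleGraph.dist_self, Nat.zero_add]⟩
  · by_contra hno
    push_neg at hno
    have hd0 : T.dist v c ≠ 0 :=
      dist_ne_zero_iff_ne_and_reachable.mpr ⟨hvc, hconn.preconnected v c⟩
    obtain ⟨p, hp, hpl⟩ := hconn.exists_path_of_dist v c
    obtain ⟨u, hadj, q, hq⟩ := Walk.exists_eq_cons_of_ne (Ne.symm hvc) p.reverse
    have hc1 := congrArg Walk.length hq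
    rw [Walk.length_reverse, hpl, Walk.length_cons] at hc1
    have hqd : T.dist u v ≤ q.length := dist_le q
    have hduc : T.dist u c = 1 := dist_eq_one_iff_adj.mpr hadj.symm
    have tri : T.dist v c ≤ T.dist v u + T.dist u c := hconn.dist_triangle
    have cuv : T.dist u v = T.dist v u := dist_comm
    have h1 : T.dist v c = T.dist v u + T.dist u c := by omega
    -- u is also a center vertex
    have hecc_u : ecc T u ≤ ecc T c := by
      rw [ecc]
      refine Finset.sup_le fun x _ => ?_
      have hcx : T.dist c x ≤ ecc T c := by
        rw [ecc]; exact Finset.le_sup (Finset.mem_univ x)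
      have cux : T.dist u x = T.dist x u := dist_comm
      have ccx : T.dist c x = T.dist x c := dist_comm
      rcases adj_dist_cases hT hadj.symm x with hl | hr
      · by_cases hx : T.dist c x = ecc T c
        · exfalso
          have h2 : T.dist u x = T.dist u c + T.dist c x := by omega
          exact hno x hx (btw_trans hT (by omega) h1 h2)
        · have : T.dist c x < ecc T c := lt_of_le_of_ne hcx hx
          omega
      · omega
    have hu_center : u ∈ _root_.center T := by
      have h2 : grad T ≤ ecc T u := Nat.sInf_le ⟨u, rfl⟩
      have h3 : ecc T c = grad T := hc
      simp only [_root_.center, Set.mem_setOf_eq]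
      omega
    have := hclosest u hu_center
    omega
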